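/- If X is a Urysohn space, then |X| ≤ wL(X)^(χ(X) · Δ̄(X)). Equivalently: if X is Urysohn with a regular G_κ-diagonal, wL(X) ≤ λ, and χ(X) ≤ μ, then |X| ≤ λ^(κ·μ). -/

import Mathlib

open Set Cardinal

universe u

/-- `X` is a Urysohn space: distinct points have disjoint closed neighborhoods. -/
def IsUrysohn (X : Type u) [TopologicalSpace X] : Prop :=
  ∀ x y : X, x ≠ y → ∃ U V : Set X, IsOpen U ∧ IsOpen V ∧ x ∈ U ∧ y ∈ V ∧
    closure U ∩ closure V = ∅

/-- `X` has a regular `G_κ`-diagonal: the diagonal is the intersection of (at most) `κ` many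
open sets of `X × X` and also of their closures. -/
def HasRegularGDiagonal (X : Type u) [TopologicalSpace X] (κ : Cardinal.{u}) : Prop :=
  ∃ (ι : Type u) (W : ι → Set (X × X)), #ι ≤ κ ∧ (∀ i, IsOpen (W i)) ∧
    Set.diagonal X = ⋂ i, W i ∧ Set.diagonal X = ⋂ i, closure (W i)

/-- `𝒰` is an open cover of `X`. -/
def IsOpenCover {X : Type u} [TopologicalSpace X] (𝒰 : Set (Set X)) : Prop :=
  (∀ U ∈ 𝒰, IsOpen U) ∧ ⋃₀ 𝒰 = Set.univ

/-- the star of a set `G` with respect to a family `𝒰`. -/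
def star {X : Type u} (G : Set X) (𝒰 : Set (Set X)) : Set X :=
  ⋃₀ {U ∈ 𝒰 | (U ∩ G).Nonempty}

/-- the star of a point `x` with respect to a family `𝒰`. -/
def starPoint {X : Type u} (x : X) (𝒰 : Set (Set X)) : Set X :=
  ⋃₀ {U ∈ 𝒰 | x ∈ U}

/-- the cellularity of `X` is at most `κ`. -/
def CellularityLE (X : Type u) [TopologicalSpace X] (κ : Cardinal.{u}) : Prop :=
  ∀ 𝒰 : Set (Set X), (∀ U ∈ 𝒰, IsOpen U ∧ U.Nonempty) →
    𝒰.PairwiseDisjoint id → #𝒰 ≤ κ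

/-- the weak Lindelöf number of `X` is at most `κ`. -/
def WeakLindelofLE (X : Type u) [TopologicalSpace X] (κ : Cardinal.{u}) : Prop :=
  ∀ 𝒰 : Set (Set X), IsOpenCover 𝒰 → ∃ 𝒱 ⊆ 𝒰, #𝒱 ≤ κ ∧ Dense (⋃₀ 𝒱)

/-- the almost Lindelöf number of `X` is at most `κ`. -/
def AlmostLindelofLE (X : Type u) [TopologicalSpace X] (κ : Cardinal.{u}) : Prop :=
  ∀ 𝒰 : Set (Set X), IsOpenCover 𝒰 →
    ∃ 𝒱 ⊆ 𝒰, #𝒱 ≤ κ ∧ ⋃ U ∈ 𝒱, closure U = Set.univ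

/-- the Lindelöf number of `X` is at most `κ`. -/
def LindelofLE (X : Type u) [TopologicalSpace X] (κ : Cardinal.{u}) : Prop :=
  ∀ 𝒰 : Set (Set X), IsOpenCover 𝒰 → ∃ 𝒱 ⊆ 𝒰, #𝒱 ≤ κ ∧ ⋃₀ 𝒱 = Set.univ

/-- the character of `X` is at most `κ`. -/
def CharacterLE (X : Type u) [TopologicalSpace X] (κ : Cardinal.{u}) : Prop :=
  ∀ x : X, ∃ B : Set (Set X), #B ≤ κ ∧ (∀ U ∈ B, IsOpen U ∧ x ∈ U) ∧
    ∀ V : Set X, IsOpen V → x ∈ V → ∃ U ∈ B, U ⊆ V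

theorem statement10 {X : Type u} [TopologicalSpace X] [T1Space X] (hX : IsUrysohn X)
    (κ lam μ : Cardinal.{u}) (hκ : ℵ₀ ≤ κ) (hlam : ℵ₀ ≤ lam) (hμ : ℵ₀ ≤ μ)
    (hd : HasRegularGDiagonal X κ) (hw : WeakLindelofLE X lam) (hch : CharacterLE X μ) :
    #X ≤ lam ^ (κ * μ) := by
  rcases isEmpty_or_nonempty X with hempty | hne
  · rw [Cardinal.mk_eq_zero X]
    exact zero_le
  obtain ⟨ι, W, hικ, hWopen, hdiagW, hdiagcl⟩ := hd
  set T := μ.out with hT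
  set L := lam.out with hL
  -- the star covers
  set 𝒰 : ι → Set (Set X) := fun η => {V | IsOpen V ∧ V ×ˢ V ⊆ W η} with h𝒰
  have hcover : ∀ η, IsOpenCover (𝒰 η) := by
    intro η
    refine ⟨fun U hU => hU.1, ?_⟩
    rw [Set.eq_univ_iff_forall]
    intro x
    have hxx : (x, x) ∈ W η := by
      have : (x, x) ∈ Set.diagonal X := rfl
      rw [hdiagW] at this
      exact Set.mem_iInter.mp this η
    obtain ⟨u, v, hu, hv, hxu, hxv, huv⟩ := isOpen_prod_iff.mp (hWopen η) x x hxx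
    refine Set.mem_sUnion.mpr ⟨u ∩ v, ⟨hu.inter hv, ?_⟩, hxu, hxv⟩
    intro p hp
    exact huv ⟨hp.1.1, hp.2.2⟩
  -- dense subfamilies
  choose 𝒱 h𝒱sub h𝒱card h𝒱dense using fun η => hw (𝒰 η) (hcover η)
  -- index the dense subfamilies by L
  have hv : ∀ η, ∃ g : L → Set X, (∀ ℓ, g ℓ ∈ 𝒱 η) ∧ ∀ V ∈ 𝒱 η, ∃ ℓ, g ℓ = V := by
    intro η
    have hne𝒱 : ((⋃₀ 𝒱 η)).Nonempty := (h𝒱dense η).nonempty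
    obtain ⟨w, V0, hV0, _⟩ := hne𝒱
    haveI : Nonempty (𝒱 η) := ⟨⟨V0, hV0⟩⟩
    have hle : #(𝒱 η) ≤ #L := by rw [hL, Cardinal.mk_out]; exact h𝒱card η
    obtain ⟨e⟩ := Cardinal.le_def _ _ |>.mp hle
    refine ⟨fun ℓ => ((Function.invFun e ℓ : 𝒱 η) : Set X), fun ℓ => (Function.invFun e ℓ).2, ?_⟩
    intro V hV
    obtain ⟨s, hs⟩ := Function.invFun_surjective e.injective ⟨V, hV⟩
    exact ⟨s, by simp only []; rw [hs]⟩
  choose v hvmem hvsurj using hv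
  -- index the neighborhood bases by T
  have hb : ∀ x : X, ∃ g : T → Set X, (∀ t, IsOpen (g t) ∧ x ∈ g t) ∧
      ∀ V : Set X, IsOpen V → x ∈ V → ∃ t, g t ⊆ V := by
    intro x
    obtain ⟨B, hBcard, hBmem, hBbase⟩ := hch x
    obtain ⟨U0, hU0, -⟩ := hBbase Set.univ isOpen_univ (Set.mem_univ x)
    haveI : Nonempty B := ⟨⟨U0, hU0⟩⟩
    have hle : #B ≤ #T := by rw [hT, Cardinal.mk_out]; exact hBcard
    obtain ⟨e⟩ := Cardinal.le_def _ _ |>.mp hle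
    refine ⟨fun t => ((Function.invFun e t : B) : Set X),
      fun t => hBmem _ (Function.invFun e t).2, ?_⟩
    intro V hVopen hxV
    obtain ⟨U, hU, hUV⟩ := hBbase V hVopen hxV
    obtain ⟨s, hs⟩ := Function.invFun_surjective e.injective ⟨U, hU⟩
    exact ⟨s, by simp only []; rw [hs]; exact hUV⟩
  choose b hbmem hbbase using hb
  -- the code of a point
  have hcode : ∀ (y : X) (p : ι × T × T),
      ∃ ℓ : L, (v p.1 ℓ ∩ (b y p.2.1 ∩ b y p.2.2)).Nonempty := by
    intro y p
    obtain ⟨η, s, t⟩ := p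
    have hopen : IsOpen (b y s ∩ b y t) := (hbmem y s).1.inter (hbmem y t).1
    have hney : (b y s ∩ b y t).Nonempty := ⟨y, (hbmem y s).2, (hbmem y t).2⟩
    obtain ⟨w, hw1, hw2⟩ := (h𝒱dense η).inter_open_nonempty _ hopen hney
    obtain ⟨V, hV, hwV⟩ := Set.mem_sUnion.mp hw2
    obtain ⟨ℓ, rfl⟩ := hvsurj η V hV
    exact ⟨ℓ, w, hwV, hw1⟩
  choose f hf using hcode
  -- injectivity of the code
  have hinj : Function.Injective f := by
    intro x z hfxz
    by_contra hxz
    have hnd : (x, z) ∉ Set.diagonal X := by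
      simpa [Set.mem_diagonal_iff] using hxz
    rw [hdiagcl] at hnd
    have : ¬ ∀ η, (x, z) ∈ closure (W η) := fun h => hnd (Set.mem_iInter.mpr h)
    push_neg at this
    obtain ⟨η, hη⟩ := this
    have hoc : IsOpen (closure (W η))ᶜ := isClosed_closure.isOpen_compl
    obtain ⟨U, Vz, hUo, hVzo, hxU, hzVz, hUVz⟩ := isOpen_prod_iff.mp hoc x z hη
    obtain ⟨s, hs⟩ := hbbase x U hUo hxU
    obtain ⟨t, ht⟩ := hbbase z Vz hVzo hzVz
    -- the common chosen member of 𝒱 η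
    set ℓ := f x (η, s, t) with hℓ
    have hℓz : f z (η, s, t) = ℓ := by rw [hℓ, hfxz]
    have hmem𝒰 : v η ℓ ∈ 𝒰 η := h𝒱sub η (hvmem η ℓ)
    obtain ⟨a, haV, has, -⟩ := hf x (η, s, t)
    obtain ⟨w, hwV, -, hwt⟩ := by
      have := hf z (η, s, t)
      rwa [hℓz] at this
    have haw : (a, w) ∈ W η := hmem𝒰.2 ⟨haV, hwV⟩
    have haw' : (a, w) ∈ U ×ˢ Vz := ⟨hs has, ht hwt⟩
    exact hUVz haw' (subset_closure haw)
  -- cardinal arithmetic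
  have h1 : #X ≤ #(ι × T × T → L) := Cardinal.mk_le_of_injective hinj
  have h2 : #(ι × T × T → L) = lam ^ #(ι × T × T) := by
    rw [← Cardinal.power_def, hL, Cardinal.mk_out]
  have h3 : #(ι × T × T) ≤ κ * μ := by
    have hTμ : #T = μ := by rw [hT, Cardinal.mk_out]
    have : #(ι × T × T) = #ι * (μ * μ) := by
      simp [Cardinal.mk_prod, Cardinal.lift_id, hTμ, mul_assoc]
    rw [this, Cardinal.mul_eq_self hμ]
    gcongr
  calc #X ≤ lam ^ #(ι × T × T) := h2 ▸ h1
    _ ≤ lam ^ (κ * μ) :=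
      Cardinal.power_le_power_left (by exact (aleph0_pos.trans_le hlam).ne') h3
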